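/- Let p be an odd prime and χ a non-principal Dirichlet character modulo p. Then for any integer t with gcd(t,p)=1, |∑_{a=1}^{p-1} χ(t·a + a⁻¹)| = |∑_{a=1}^{p-1} χ(a)·((a²-t)/p)|, where a⁻¹ denotes the multiplicative inverse of a modulo p and (·/p) is the Legendre symbol. -/

import Mathlib

open Complex Finset

private lemma sum_units_eq_sum_zmod {p : ℕ} [NeZero p] (g : ZMod p → ℂ)
    (hg : ∀ x : ZMod p, ¬IsUnit x → g x = 0) :
    ∑ u : (ZMod p)ˣ, g ↑u = ∑ x : ZMod p, g x := by
  classical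
  have h1 : ∑ u : (ZMod p)ˣ, g ↑u
      = ∑ x ∈ Finset.univ.image (fun u : (ZMod p)ˣ => (u : ZMod p)), g x :=
    (Finset.sum_image (fun _ _ _ _ h => Units.ext h)).symm
  rw [h1]
  apply Finset.sum_subset (Finset.subset_univ _)
  intro x _ hx
  apply hg
  intro h
  exact hx (Finset.mem_image.mpr ⟨h.unit, Finset.mem_univ _, h.unit_spec⟩)

theorem abs_char_sum_eq (p : ℕ) [Fact p.Prime] (hp2 : p ≠ 2)
    (χ : DirichletCharacter ℂ p) (hχ : χ ≠ 1)
    (t : ℤ) (ht : Int.gcd t p = 1) :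
    ‖(∑ a : (ZMod p)ˣ, χ ((t : ZMod p) * (a : ZMod p) + ((a⁻¹ : (ZMod p)ˣ) : ZMod p)))‖
      = ‖(∑ a : (ZMod p)ˣ, χ (a : ZMod p) *
          (legendreSym p (((a : ZMod p).val : ℤ) ^ 2 - t) : ℂ))‖ := by
  classical
  have hp : p.Prime := Fact.out
  set t' : ZMod p := (t : ZMod p) with ht'def
  have ht' : t' ≠ 0 := by
    rw [ht'def, Ne, ZMod.intCast_zmod_eq_zero_iff_dvd]
    intro hdvd
    have hd := Int.dvd_coe_gcd hdvd (dvd_refl (p : ℤ))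
    rw [ht] at hd
    have h1 : (p : ℤ) ≤ 1 := Int.le_of_dvd one_pos (by exact_mod_cast hd)
    have h2 := hp.two_le
    omega
  have h2 : (2 : ZMod p) ≠ 0 := by
    intro h
    have := (ZMod.natCast_eq_zero_iff 2 p).mp (by exact_mod_cast h)
    exact hp2 ((Nat.prime_dvd_prime_iff_eq hp Nat.prime_two).mp this)
  set f : (ZMod p)ˣ → ZMod p := fun u => 2⁻¹ * ((u : ZMod p) + t' * ((u⁻¹ : (ZMod p)ˣ) : ZMod p))
    with hf
  -- fiber cardinality
  have fib : ∀ a : ZMod p,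
      (univ.filter fun u : (ZMod p)ˣ => f u = a).card
        = (univ.filter fun x : ZMod p => x ^ 2 = a ^ 2 - t').card := by
    intro a
    have jproof : ∀ x ∈ univ.filter fun x : ZMod p => x ^ 2 = a ^ 2 - t', IsUnit (a + x) := by
      intro x hx
      rw [Finset.mem_filter] at hx
      refine IsUnit.of_mul_eq_one ((a - x) * t'⁻¹) ?_
      rw [← mul_assoc]
      have hmul : (a + x) * (a - x) = t' := by linear_combination -hx.2
      rw [hmul, mul_inv_cancel₀ ht']
    refine Finset.card_bij' (fun u _ => (u : ZMod p) - a) (fun x hx => (jproof x hx).unit)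
      ?_ ?_ ?_ ?_
    · intro u hu
      have hu2 : 2⁻¹ * ((u : ZMod p) + t' * ((u⁻¹ : (ZMod p)ˣ) : ZMod p)) = a :=
        (Finset.mem_filter.mp hu).2
      rw [Units.val_inv_eq_inv_val] at hu2
      have hu0 : (u : ZMod p) ≠ 0 := Units.ne_zero u
      field_simp at hu2
      simp only [Finset.mem_filter, Finset.mem_univ, true_and]
      linear_combination hu2
    · intro x hx
      have hx2 : x ^ 2 = a ^ 2 - t' := (Finset.mem_filter.mp hx).2
      simp only [Finset.mem_filter, Finset.mem_univ, true_and]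
      have hspec : ((jproof x hx).unit : ZMod p) = a + x := IsUnit.unit_spec _
      show 2⁻¹ * (((jproof x hx).unit : ZMod p)
          + t' * (((jproof x hx).unit⁻¹ : (ZMod p)ˣ) : ZMod p)) = a
      rw [Units.val_inv_eq_inv_val, hspec]
      have hax : a + x ≠ 0 := (jproof x hx).ne_zero
      have hmul : (a + x) * (a - x) = t' := by linear_combination -hx2
      field_simp
      linear_combination 2 * hmul + 3 * hx2
    · intro u hu
      exact Units.ext (by simp [IsUnit.unit_spec])
    · intro x hx
      simp [IsUnit.unit_spec]
  -- counting formula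
  have key : ∑ u : (ZMod p)ˣ, χ (f u)
      = ∑ a : ZMod p, ((univ.filter fun x : ZMod p => x ^ 2 = a ^ 2 - t').card : ℂ) * χ a := by
    have step1 : ∀ u : (ZMod p)ˣ, χ (f u) = ∑ a : ZMod p, if a = f u then χ a else 0 := by
      intro u
      rw [Finset.sum_ite_eq' Finset.univ (f u) (fun a => χ a)]
      simp
    rw [Finset.sum_congr rfl fun u _ => step1 u, Finset.sum_comm]
    refine Finset.sum_congr rfl fun a _ => ?_
    rw [← Finset.sum_filter, Finset.sum_const, nsmul_eq_mul]
    congr 1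
    have hsw : (univ.filter fun u : (ZMod p)ˣ => a = f u)
        = univ.filter fun u : (ZMod p)ˣ => f u = a := by
      apply Finset.filter_congr
      intro u _
      simp [eq_comm]
    rw [hsw, fib a]
  -- card in terms of legendre symbol
  have hcast : ∀ a : ZMod p, ((((a.val : ℤ) ^ 2 - t : ℤ)) : ZMod p) = a ^ 2 - t' := by
    intro a
    push_cast
    simp [ZMod.natCast_val, ZMod.cast_id]
    exact ht'def.symm
  have hcard : ∀ a : ZMod p,
      ((univ.filter fun x : ZMod p => x ^ 2 = a ^ 2 - t').card : ℂ)
        = (legendreSym p ((a.val : ℤ) ^ 2 - t) : ℂ) + 1 := by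
    intro a
    have hls := legendreSym.card_sqrts p hp2 ((a.val : ℤ) ^ 2 - t)
    rw [hcast a] at hls
    rw [Set.toFinset_setOf] at hls
    exact_mod_cast hls
  have hzero : ∑ a : ZMod p, χ a = 0 := MulChar.sum_eq_zero_of_ne_one hχ
  have key2 : ∑ u : (ZMod p)ˣ, χ (f u)
      = ∑ a : ZMod p, χ a * (legendreSym p ((a.val : ℤ) ^ 2 - t) : ℂ) := by
    rw [key]
    calc ∑ a : ZMod p, ((univ.filter fun x : ZMod p => x ^ 2 = a ^ 2 - t').card : ℂ) * χ a
        = ∑ a : ZMod p, (χ a * (legendreSym p ((a.val : ℤ) ^ 2 - t) : ℂ) + χ a) := by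
          refine Finset.sum_congr rfl fun a _ => ?_
          rw [hcard a]; ring
      _ = ∑ a : ZMod p, χ a * (legendreSym p ((a.val : ℤ) ^ 2 - t) : ℂ) := by
          rw [Finset.sum_add_distrib, hzero, add_zero]
  have hRHS : ∑ a : (ZMod p)ˣ, χ (a : ZMod p) * (legendreSym p (((a : ZMod p).val : ℤ) ^ 2 - t) : ℂ)
      = ∑ a : ZMod p, χ a * (legendreSym p ((a.val : ℤ) ^ 2 - t) : ℂ) :=
    sum_units_eq_sum_zmod (fun x => χ x * (legendreSym p ((x.val : ℤ) ^ 2 - t) : ℂ)) (fun x hx => by simp only [MulChar.map_nonunit χ hx, zero_mul])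
  have hS3 : ∑ u : (ZMod p)ˣ, χ (f u)
      = χ (2⁻¹ : ZMod p) *
        ∑ a : (ZMod p)ˣ, χ ((t : ZMod p) * (a : ZMod p) + ((a⁻¹ : (ZMod p)ˣ) : ZMod p)) := by
    rw [hf]
    simp only [map_mul χ]
    rw [← Finset.mul_sum]
    congr 1
    refine Fintype.sum_equiv (Equiv.inv (ZMod p)ˣ) _ _ fun u => ?_
    simp only [Equiv.inv_apply]
    rw [inv_inv]
    ring_nf
    rw [ht'def, mul_comm (t : ZMod p)]
  have h2u : IsUnit (2 : ZMod p) := isUnit_iff_ne_zero.mpr h2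
  have hnorm : ‖χ (2⁻¹ : ZMod p)‖ = 1 := by
    have hn := χ.unit_norm_eq_one h2u.unit⁻¹
    rw [Units.val_inv_eq_inv_val, h2u.unit_spec] at hn
    exact hn
  rw [hRHS, ← key2, hS3, norm_mul, hnorm, one_mul]
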